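/- Truncation bias bound: Let Z be a random matrix in R^{d₁×d₂} with E[Z] = 0, and suppose R, p, σ are nonnegative reals with Pr[‖Z‖ ≥ R] ≤ p and max{‖E[Z Z^T]‖, ‖E[Z^T Z]‖} ≤ σ². Define Z' = Z·1(‖Z‖ ≤ R). Then ‖E[Z']‖ ≤ σ√p, where ‖·‖ is the spectral norm. -/

import Mathlib

open MeasureTheory Matrix
open scoped InnerProductSpace

/-- The spectral norm (ℓ²→ℓ² operator norm) of a real matrix. -/
noncomputable def specNorm {d₁ d₂ : ℕ} (A : Matrix (Fin d₁) (Fin d₂) ℝ) : ℝ :=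
  ‖LinearMap.toContinuousLinearMap (Matrix.toEuclideanLin A)‖

lemma toEuclideanLin_apply' {d₁ d₂ : ℕ} (A : Matrix (Fin d₁) (Fin d₂) ℝ)
    (v : EuclideanSpace ℝ (Fin d₂)) (i : Fin d₁) :
    Matrix.toEuclideanLin A v i = ∑ j, A i j * v j := by
  simp [Matrix.toEuclideanLin_apply, Matrix.mulVec, dotProduct]

lemma le_specNorm {d₁ d₂ : ℕ} (A : Matrix (Fin d₁) (Fin d₂) ℝ) (v : EuclideanSpace ℝ (Fin d₂)) :
    ‖Matrix.toEuclideanLin A v‖ ≤ specNorm A * ‖v‖ := by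
  have := (LinearMap.toContinuousLinearMap (Matrix.toEuclideanLin A)).le_opNorm v
  simpa [specNorm] using this

lemma specNorm_le {d₁ d₂ : ℕ} (A : Matrix (Fin d₁) (Fin d₂) ℝ) {c : ℝ} (hc : 0 ≤ c)
    (h : ∀ v : EuclideanSpace ℝ (Fin d₂), ‖Matrix.toEuclideanLin A v‖ ≤ c * ‖v‖) :
    specNorm A ≤ c := by
  refine ContinuousLinearMap.opNorm_le_bound _ hc ?_
  simpa using h

lemma inner_euc {d₁ : ℕ} (x y : EuclideanSpace ℝ (Fin d₁)) :
    ⟪x, y⟫_ℝ = ∑ i, x i * y i := by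
  simp [PiLp.inner_apply, RCLike.inner_apply, conj_trivial, mul_comm]

lemma spec_cont {d₁ d₂ : ℕ} : Continuous fun A : Matrix (Fin d₁) (Fin d₂) ℝ => specNorm A := by
  have h : (fun A : Matrix (Fin d₁) (Fin d₂) ℝ => specNorm A)
      = (fun B => ‖B‖) ∘ (Matrix.toEuclideanLin.trans LinearMap.toContinuousLinearMap).toLinearMap :=
    rfl
  rw [h]
  exact continuous_norm.comp (LinearMap.continuous_of_finiteDimensional _)

lemma spec_cont' {d₁ d₂ : ℕ} :
    Continuous fun A : Fin d₁ → Fin d₂ → ℝ => specNorm (Matrix.of A) := spec_cont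

lemma cs_integral {Ω : Type*} [MeasurableSpace Ω] {μ : Measure Ω} (f g : Ω → ℝ)
    (hf : MemLp f 2 μ) (hg : MemLp g 2 μ) :
    (∫ ω, f ω * g ω ∂μ) ^ 2 ≤ (∫ ω, f ω ^ 2 ∂μ) * (∫ ω, g ω ^ 2 ∂μ) := by
  set F := hf.toLp f with hF
  set G := hg.toLp g with hG
  have h1 : ⟪F, G⟫_ℝ = ∫ ω, f ω * g ω ∂μ := by
    rw [L2.inner_def]
    refine integral_congr_ae ?_
    filter_upwards [hf.coeFn_toLp, hg.coeFn_toLp] with ω h1 h2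
    simp [hF, hG, h1, h2, RCLike.inner_apply, conj_trivial, mul_comm]
  have h2 : ⟪F, F⟫_ℝ = ∫ ω, f ω ^ 2 ∂μ := by
    rw [L2.inner_def]
    refine integral_congr_ae ?_
    filter_upwards [hf.coeFn_toLp] with ω h1
    simp [hF, h1, RCLike.inner_apply, conj_trivial, sq]
  have h3 : ⟪G, G⟫_ℝ = ∫ ω, g ω ^ 2 ∂μ := by
    rw [L2.inner_def]
    refine integral_congr_ae ?_
    filter_upwards [hg.coeFn_toLp] with ω h1
    simp [hG, h1, RCLike.inner_apply, conj_trivial, sq]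
  calc (∫ ω, f ω * g ω ∂μ) ^ 2 = ⟪F, G⟫_ℝ ^ 2 := by rw [h1]
    _ ≤ ⟪F, F⟫_ℝ * ⟪G, G⟫_ℝ := by
        have := abs_real_inner_le_norm F G
        nlinarith [real_inner_self_eq_norm_sq F, real_inner_self_eq_norm_sq G,
          abs_nonneg (⟪F, G⟫_ℝ), sq_abs (⟪F, G⟫_ℝ), norm_nonneg F, norm_nonneg G]
    _ = _ := by rw [h2, h3]

theorem stmt7 {d₁ d₂ : ℕ} {Ω : Type*} [MeasurableSpace Ω]
    (μ : Measure Ω) [IsProbabilityMeasure μ]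
    (Z : Ω → Matrix (Fin d₁) (Fin d₂) ℝ)
    (hmeas : ∀ i j, Measurable fun ω => Z ω i j)
    (hint : ∀ i j, Integrable (fun ω => Z ω i j) μ)
    (hint2 : ∀ i j, Integrable (fun ω => (Z ω * (Z ω)ᵀ) i j) μ)
    (hint2' : ∀ i j, Integrable (fun ω => ((Z ω)ᵀ * Z ω) i j) μ)
    (hmean : ∀ i j, (∫ ω, Z ω i j ∂μ) = 0)
    (R p σ : ℝ) (hR : 0 ≤ R) (hp : 0 ≤ p) (hσ : 0 ≤ σ)
    (htail : (μ {ω | R ≤ specNorm (Z ω)}).toReal ≤ p)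
    (hvar1 : specNorm (Matrix.of fun i j => ∫ ω, (Z ω * (Z ω)ᵀ) i j ∂μ) ≤ σ ^ 2)
    (hvar2 : specNorm (Matrix.of fun i j => ∫ ω, ((Z ω)ᵀ * Z ω) i j ∂μ) ≤ σ ^ 2) :
    specNorm (Matrix.of fun i j =>
        ∫ ω, (if specNorm (Z ω) ≤ R then Z ω i j else 0) ∂μ) ≤ σ * Real.sqrt p := by
  classical
  set M : Matrix (Fin d₁) (Fin d₂) ℝ := Matrix.of fun i j =>
      ∫ ω, (if specNorm (Z ω) ≤ R then Z ω i j else 0) ∂μ with hMdef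
  set g : Ω → ℝ := fun ω => if specNorm (Z ω) ≤ R then 0 else 1 with hgdef
  set W : Matrix (Fin d₁) (Fin d₁) ℝ :=
      Matrix.of fun i j => ∫ ω, (Z ω * (Z ω)ᵀ) i j ∂μ with hWdef
  -- measurability of specNorm ∘ Z, of g
  have hZm : Measurable fun ω => (fun i j => Z ω i j : Fin d₁ → Fin d₂ → ℝ) :=
    measurable_pi_lambda _ fun i => measurable_pi_lambda _ fun j => hmeas i j
  have hsm : Measurable fun ω => specNorm (Z ω) :=
    (spec_cont'.measurable).comp hZm
  have hSmeas : MeasurableSet {ω | specNorm (Z ω) ≤ R} := measurableSet_le hsm measurable_const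
  have hgm : Measurable g := Measurable.ite hSmeas measurable_const measurable_const
  have hgbd : ∀ ω, ‖g ω‖ ≤ 1 := by
    intro ω
    by_cases hω : specNorm (Z ω) ≤ R
    · simp [hgdef, if_pos hω]
    · simp [hgdef, if_neg hω]
  have hgL2 : MemLp g 2 μ :=
    MemLp.of_bound hgm.aestronglyMeasurable 1 (Filter.Eventually.of_forall hgbd)
  have hgsq : ∀ ω, g ω ^ 2 = g ω := by
    intro ω
    by_cases hω : specNorm (Z ω) ≤ R
    · simp [hgdef, if_pos hω]
    · simp [hgdef, if_neg hω]
  have hltmeas : MeasurableSet {ω | R < specNorm (Z ω)} :=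
    measurableSet_lt measurable_const hsm
  have hgint : ∫ ω, g ω ∂μ ≤ p := by
    have hgeq : g = Set.indicator {ω | R < specNorm (Z ω)} fun _ => (1 : ℝ) := by
      funext ω
      by_cases hω : specNorm (Z ω) ≤ R
      · have h2 : ¬ R < specNorm (Z ω) := not_lt.mpr hω
        simp [hgdef, Set.indicator_apply, if_pos hω, h2]
      · have h2 : R < specNorm (Z ω) := not_le.mp hω
        simp [hgdef, Set.indicator_apply, if_neg hω, h2]
    rw [hgeq, integral_indicator_const _ hltmeas, smul_eq_mul, mul_one]
    refine le_trans ?_ htail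
    refine ENNReal.toReal_mono (measure_ne_top μ _) (measure_mono ?_)
    intro ω hω
    have h7 : R < specNorm (Z ω) := hω
    exact h7.le
  -- square-integrability of entries
  have hsq : ∀ i j, Integrable (fun ω => (Z ω i j) ^ 2) μ := by
    intro i j
    refine (hint2 i i).mono' ((hmeas i j).pow_const 2).aestronglyMeasurable ?_
    filter_upwards with ω
    have he : (Z ω * (Z ω)ᵀ) i i = ∑ k, (Z ω i k) ^ 2 := by
      simp [Matrix.mul_apply, sq]
    rw [Real.norm_eq_abs, abs_of_nonneg (sq_nonneg _), he]
    exact Finset.single_le_sum (f := fun k => (Z ω i k) ^ 2)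
      (fun k _ => sq_nonneg _) (Finset.mem_univ j)
  have hL2 : ∀ i j, MemLp (fun ω => Z ω i j) 2 μ := fun i j =>
    (memLp_two_iff_integrable_sq (hmeas i j).aestronglyMeasurable).mpr (hsq i j)
  -- integrability of Z i j * g
  have hZg_int : ∀ i j, Integrable (fun ω => Z ω i j * g ω) μ := by
    intro i j
    refine (hint i j).norm.mono' ((hmeas i j).mul hgm).aestronglyMeasurable ?_
    filter_upwards with ω
    rw [norm_mul]
    calc ‖Z ω i j‖ * ‖g ω‖ ≤ ‖Z ω i j‖ * 1 :=
          mul_le_mul_of_nonneg_left (hgbd ω) (norm_nonneg _)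
      _ = ‖Z ω i j‖ := mul_one _
  -- entry formula
  have hMij : ∀ i j, M i j = - ∫ ω, Z ω i j * g ω ∂μ := by
    intro i j
    have hsplit : ∀ ω, (if specNorm (Z ω) ≤ R then Z ω i j else 0)
        = Z ω i j - Z ω i j * g ω := by
      intro ω
      by_cases hω : specNorm (Z ω) ≤ R <;> simp [hgdef, hω]
    calc M i j = ∫ ω, (Z ω i j - Z ω i j * g ω) ∂μ := by
          rw [hMdef]
          simp only [Matrix.of_apply]
          exact integral_congr_ae (Filter.Eventually.of_forall fun ω => hsplit ω)
      _ = (∫ ω, Z ω i j ∂μ) - ∫ ω, Z ω i j * g ω ∂μ :=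
          integral_sub (hint i j) (hZg_int i j)
      _ = - ∫ ω, Z ω i j * g ω ∂μ := by rw [hmean i j]; ring
  -- key bilinear bound
  have key : ∀ (u : EuclideanSpace ℝ (Fin d₁)) (v : EuclideanSpace ℝ (Fin d₂)),
      ⟪u, Matrix.toEuclideanLin M v⟫_ℝ ≤ σ * Real.sqrt p * (‖u‖ * ‖v‖) := by
    intro u v
    set f : Ω → ℝ := fun ω => ∑ i, ∑ j, (u i * v j) * Z ω i j with hfdef
    have hf_int : Integrable f μ :=
      integrable_finset_sum _ fun i _ =>
        integrable_finset_sum _ fun j _ => (hint i j).const_mul _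
    have hfL2 : MemLp f 2 μ :=
      memLp_finset_sum _ fun i _ =>
        memLp_finset_sum _ fun j _ => (hL2 i j).const_mul _
    have hf2_int : Integrable (fun ω => f ω ^ 2) μ :=
      (memLp_two_iff_integrable_sq hfL2.aestronglyMeasurable).mp hfL2
    -- inner product identity
    have hswap : ∫ ω, ∑ i, ∑ j, (u i * v j) * (Z ω i j * g ω) ∂μ
        = ∑ i, ∑ j, ∫ ω, (u i * v j) * (Z ω i j * g ω) ∂μ := by
      rw [integral_finset_sum _ (fun i _ =>
        integrable_finset_sum _ fun j _ => (hZg_int i j).const_mul _)]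
      exact Finset.sum_congr rfl fun i _ =>
        integral_finset_sum _ fun j _ => (hZg_int i j).const_mul _
    have hinner : ⟪u, Matrix.toEuclideanLin M v⟫_ℝ = - ∫ ω, f ω * g ω ∂μ := by
      have e1 : ∀ ω, f ω * g ω = ∑ i, ∑ j, (u i * v j) * (Z ω i j * g ω) := by
        intro ω
        rw [hfdef, Finset.sum_mul]
        refine Finset.sum_congr rfl fun i _ => ?_
        rw [Finset.sum_mul]
        exact Finset.sum_congr rfl fun j _ => by ring
      rw [inner_euc]
      calc ∑ i, u i * Matrix.toEuclideanLin M v i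
          = ∑ i, ∑ j, (u i * v j) * M i j := by
            refine Finset.sum_congr rfl fun i _ => ?_
            rw [toEuclideanLin_apply', Finset.mul_sum]
            exact Finset.sum_congr rfl fun j _ => by ring
        _ = ∑ i, ∑ j, - ∫ ω, (u i * v j) * (Z ω i j * g ω) ∂μ := by
            refine Finset.sum_congr rfl fun i _ => Finset.sum_congr rfl fun j _ => ?_
            rw [hMij i j, integral_const_mul]
            ring
        _ = - ∑ i, ∑ j, ∫ ω, (u i * v j) * (Z ω i j * g ω) ∂μ := by
            simp
        _ = - ∫ ω, ∑ i, ∑ j, (u i * v j) * (Z ω i j * g ω) ∂μ := by rw [hswap]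
        _ = - ∫ ω, f ω * g ω ∂μ := by
            congr 1
            exact integral_congr_ae (Filter.Eventually.of_forall fun ω => (e1 ω).symm)
    -- pointwise second-moment bound
    set h : Ω → ℝ := fun ω => ∑ i, ∑ i', (u i * u i') * (Z ω * (Z ω)ᵀ) i i' with hhdef
    have hh_int : Integrable h μ :=
      integrable_finset_sum _ fun i _ =>
        integrable_finset_sum _ fun i' _ => (hint2 i i').const_mul _
    have hnv : ∑ j, v j ^ 2 = ‖v‖ ^ 2 := by
      have := real_inner_self_eq_norm_sq v
      rw [inner_euc] at this
      simpa [sq] using this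
    have hpt : ∀ ω, f ω ^ 2 ≤ h ω * ‖v‖ ^ 2 := by
      intro ω
      have hf2 : f ω = ∑ j, (∑ i, u i * Z ω i j) * v j := by
        simp only [hfdef]
        rw [Finset.sum_comm]
        refine Finset.sum_congr rfl fun j _ => ?_
        rw [Finset.sum_mul]
        exact Finset.sum_congr rfl fun i _ => by ring
      have key2 : ∑ j, (∑ i, u i * Z ω i j) ^ 2 = h ω := by
        have e3 : ∀ j, (∑ i, u i * Z ω i j) ^ 2
            = ∑ i, ∑ i', (u i * u i') * (Z ω i j * Z ω i' j) := by
          intro j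
          rw [sq, Finset.sum_mul_sum]
          exact Finset.sum_congr rfl fun i _ =>
            Finset.sum_congr rfl fun i' _ => by ring
        simp only [e3, hhdef]
        rw [Finset.sum_comm]
        refine Finset.sum_congr rfl fun i _ => ?_
        rw [Finset.sum_comm]
        refine Finset.sum_congr rfl fun i' _ => ?_
        rw [Matrix.mul_apply, Finset.mul_sum]
        refine Finset.sum_congr rfl fun j _ => ?_
        rw [Matrix.transpose_apply]
      calc f ω ^ 2 = (∑ j, (∑ i, u i * Z ω i j) * v j) ^ 2 := by rw [hf2]
        _ ≤ (∑ j, (∑ i, u i * Z ω i j) ^ 2) * ∑ j, v j ^ 2 :=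
            Finset.sum_mul_sq_le_sq_mul_sq _ _ _
        _ = h ω * ‖v‖ ^ 2 := by rw [key2, hnv]
    have hWsum : ∫ ω, h ω ∂μ = ∑ i, ∑ i', (u i * u i') * W i i' := by
      rw [integral_finset_sum _ (fun i _ =>
        integrable_finset_sum _ fun i' _ => (hint2 i i').const_mul _)]
      refine Finset.sum_congr rfl fun i _ => ?_
      rw [integral_finset_sum _ (fun i' _ => (hint2 i i').const_mul _)]
      refine Finset.sum_congr rfl fun i' _ => ?_
      rw [integral_const_mul]
      simp [hWdef]
    have hWle : ∑ i, ∑ i', (u i * u i') * W i i' ≤ σ ^ 2 * ‖u‖ ^ 2 := by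
      have e2 : ∑ i, ∑ i', (u i * u i') * W i i'
          = ⟪u, Matrix.toEuclideanLin W u⟫_ℝ := by
        rw [inner_euc]
        refine Finset.sum_congr rfl fun i _ => ?_
        rw [toEuclideanLin_apply', Finset.mul_sum]
        exact Finset.sum_congr rfl fun i' _ => by ring
      rw [e2]
      calc ⟪u, Matrix.toEuclideanLin W u⟫_ℝ ≤ ‖u‖ * ‖Matrix.toEuclideanLin W u‖ :=
            real_inner_le_norm _ _
        _ ≤ ‖u‖ * (specNorm W * ‖u‖) :=
            mul_le_mul_of_nonneg_left (le_specNorm W u) (norm_nonneg _)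
        _ ≤ ‖u‖ * (σ ^ 2 * ‖u‖) := by
            refine mul_le_mul_of_nonneg_left ?_ (norm_nonneg _)
            exact mul_le_mul_of_nonneg_right hvar1 (norm_nonneg _)
        _ = σ ^ 2 * ‖u‖ ^ 2 := by ring
    have hfsq : ∫ ω, f ω ^ 2 ∂μ ≤ σ ^ 2 * ‖u‖ ^ 2 * ‖v‖ ^ 2 := by
      calc ∫ ω, f ω ^ 2 ∂μ ≤ ∫ ω, h ω * ‖v‖ ^ 2 ∂μ :=
            integral_mono hf2_int (hh_int.mul_const _) hpt
        _ = (∫ ω, h ω ∂μ) * ‖v‖ ^ 2 := integral_mul_const _ _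
        _ = (∑ i, ∑ i', (u i * u i') * W i i') * ‖v‖ ^ 2 := by rw [hWsum]
        _ ≤ σ ^ 2 * ‖u‖ ^ 2 * ‖v‖ ^ 2 :=
            mul_le_mul_of_nonneg_right hWle (sq_nonneg _)
    have hgsqi : ∫ ω, g ω ^ 2 ∂μ ≤ p := by
      calc ∫ ω, g ω ^ 2 ∂μ = ∫ ω, g ω ∂μ :=
            integral_congr_ae (Filter.Eventually.of_forall fun ω => hgsq ω)
        _ ≤ p := hgint
    have hcs := cs_integral f g hfL2 hgL2
    have hf2nn : 0 ≤ ∫ ω, f ω ^ 2 ∂μ := integral_nonneg fun ω => sq_nonneg _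
    have hg2nn : 0 ≤ ∫ ω, g ω ^ 2 ∂μ := integral_nonneg fun ω => sq_nonneg _
    have hc : (0:ℝ) ≤ σ * Real.sqrt p * (‖u‖ * ‖v‖) := by positivity
    have hcsq : (σ * Real.sqrt p * (‖u‖ * ‖v‖)) ^ 2 = σ ^ 2 * ‖u‖ ^ 2 * ‖v‖ ^ 2 * p := by
      have hsp : Real.sqrt p ^ 2 = p := Real.sq_sqrt hp
      rw [mul_pow, mul_pow, mul_pow, hsp]
      ring
    have hfg2 : (∫ ω, f ω * g ω ∂μ) ^ 2 ≤ (σ * Real.sqrt p * (‖u‖ * ‖v‖)) ^ 2 := by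
      rw [hcsq]
      calc (∫ ω, f ω * g ω ∂μ) ^ 2 ≤ (∫ ω, f ω ^ 2 ∂μ) * ∫ ω, g ω ^ 2 ∂μ := hcs
        _ ≤ (σ ^ 2 * ‖u‖ ^ 2 * ‖v‖ ^ 2) * p := by
            refine mul_le_mul hfsq hgsqi hg2nn ?_
            positivity
    rw [hinner]
    have h5 : |∫ ω, f ω * g ω ∂μ| ≤ σ * Real.sqrt p * (‖u‖ * ‖v‖) := by
      have h6 := Real.sqrt_le_sqrt hfg2
      rwa [Real.sqrt_sq_eq_abs, Real.sqrt_sq hc] at h6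
    linarith [neg_le_abs (∫ ω, f ω * g ω ∂μ), neg_abs_le (∫ ω, f ω * g ω ∂μ)]
  -- conclude
  refine specNorm_le _ (by positivity) fun v => ?_
  by_cases h0 : Matrix.toEuclideanLin M v = 0
  · rw [h0, norm_zero]
    positivity
  · have hpos : 0 < ‖Matrix.toEuclideanLin M v‖ := norm_pos_iff.mpr h0
    have h1 := key (Matrix.toEuclideanLin M v) v
    rw [real_inner_self_eq_norm_sq] at h1
    nlinarith [h1, hpos]
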